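/- Let k ≥ 1 be an integer, z₀ ∈ ℂ, and let f be meromorphic at z₀ with a pole of order m ≥ 1 at z₀. Let a₀, …, a_{k−1} be analytic at z₀ and set F = f^{(k)} + a_{k−1}f^{(k−1)} + ⋯ + a₀f. Then (z − z₀)^k·F(z)/f(z) → (−1)^k·m(m+1)⋯(m+k−1) as z → z₀; in particular F has a pole of order m + k at z₀. -/

import Mathlib

open Filter Topology

lemma ev_deriv_congr {f h : ℂ → ℂ} {z₀ : ℂ} (hfh : f =ᶠ[𝓝[≠] z₀] h) :
    deriv f =ᶠ[𝓝[≠] z₀] deriv h := by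
  obtain ⟨t, hto, hz₀t, hts⟩ := mem_nhdsWithin.mp hfh
  have hopen : IsOpen (t ∩ {z₀}ᶜ) := hto.inter isOpen_compl_singleton
  filter_upwards [mem_nhdsWithin.mpr ⟨t, hto, hz₀t, Set.Subset.rfl⟩] with z hz
  exact Filter.EventuallyEq.deriv_eq <|
    Filter.eventuallyEq_iff_exists_mem.mpr ⟨t ∩ {z₀}ᶜ, hopen.mem_nhds hz, fun w hw => hts hw⟩

lemma analyticAt_deriv {g : ℂ → ℂ} {z₀ : ℂ} (h : AnalyticAt ℂ g z₀) :
    AnalyticAt ℂ (deriv g) z₀ := by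
  obtain ⟨s, hs, hsub⟩ := Filter.eventually_iff_exists_mem.mp h.eventually_analyticAt
  exact (AnalyticOnNhd.deriv (fun z hz => hsub z hz)) z₀ (mem_of_mem_nhds hs)

lemma step_deriv {g : ℂ → ℂ} {z₀ : ℂ} (hg : AnalyticAt ℂ g z₀) (n : ℕ) (hn : 1 ≤ n) :
    (deriv fun w => g w / (w - z₀) ^ n) =ᶠ[𝓝[≠] z₀]
      fun z => (deriv g z * (z - z₀) - (n : ℂ) * g z) / (z - z₀) ^ (n + 1) := by
  have hdiff : ∀ᶠ z in 𝓝 z₀, DifferentiableAt ℂ g z :=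
    hg.eventually_analyticAt.mono fun z hz => hz.differentiableAt
  filter_upwards [nhdsWithin_le_nhds hdiff, self_mem_nhdsWithin] with z hzd hzne
  have hsub : z - z₀ ≠ 0 := sub_ne_zero.mpr hzne
  have hpow : HasDerivAt (fun w : ℂ => (w - z₀) ^ n) ((n : ℂ) * (z - z₀) ^ (n - 1)) z := by
    simpa using ((hasDerivAt_id z).sub_const z₀).fun_pow n
  rw [deriv_fun_div hzd hpow.differentiableAt (pow_ne_zero _ hsub), hpow.deriv]
  obtain ⟨n', rfl⟩ := Nat.exists_eq_add_of_le hn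
  have : 1 + n' - 1 = n' := by omega
  rw [this]
  field_simp
  ring



/-- `f` has a pole of order `m` at `z₀`: near `z₀` (away from `z₀`) we have
`f = g/(z − z₀)^m` with `g` analytic at `z₀` and `g(z₀) ≠ 0`. -/
def HasPoleOfOrderAt (f : ℂ → ℂ) (z₀ : ℂ) (m : ℕ) : Prop :=
  ∃ g : ℂ → ℂ, AnalyticAt ℂ g z₀ ∧ g z₀ ≠ 0 ∧
    ∀ᶠ z in nhdsWithin z₀ {z₀}ᶜ, f z = g z / (z - z₀) ^ m

/-- display (ac7): if `f` has a pole of order `m` at `z₀` and the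
`a_j` are analytic at `z₀`, then with
`F = f^{(k)} + a_{k−1}f^{(k−1)} + ⋯ + a₀f` one has
`(z − z₀)^k F/f → (−1)^k m(m+1)⋯(m+k−1)` as `z → z₀`, and `F` has a pole of
order `m + k` at `z₀`. -/
theorem leading_laurent_coefficient_of_linear_differential_polynomial
    (k : ℕ) (hk : 1 ≤ k) (z₀ : ℂ) (f : ℂ → ℂ) (m : ℕ) (hm : 1 ≤ m)
    (hf : HasPoleOfOrderAt f z₀ m)
    (a : ℕ → ℂ → ℂ) (ha : ∀ j, j < k → AnalyticAt ℂ (a j) z₀) :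
    Filter.Tendsto
      (fun z : ℂ => (z - z₀) ^ k *
        (iteratedDeriv k f z + ∑ j ∈ Finset.range k, a j z * iteratedDeriv j f z) / f z)
      (nhdsWithin z₀ {z₀}ᶜ)
      (nhds ((-1) ^ k * ∏ i ∈ Finset.range k, ((m : ℂ) + (i : ℂ)))) ∧
    HasPoleOfOrderAt
      (fun z : ℂ => iteratedDeriv k f z + ∑ j ∈ Finset.range k, a j z * iteratedDeriv j f z)
      z₀ (m + k) := by
  obtain ⟨g, hg, hg0, hfg⟩ := hf
  -- the key induction: derivatives of f
  have key : ∀ j : ℕ, ∃ gj : ℂ → ℂ, AnalyticAt ℂ gj z₀ ∧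
      gj z₀ = (-1) ^ j * (∏ i ∈ Finset.range j, ((m : ℂ) + (i : ℂ))) * g z₀ ∧
      (iteratedDeriv j f) =ᶠ[𝓝[≠] z₀] fun z => gj z / (z - z₀) ^ (m + j) := by
    intro j
    induction j with
    | zero =>
      exact ⟨g, hg, by simp, by rw [iteratedDeriv_zero]; exact hfg⟩
    | succ j ih =>
      obtain ⟨gj, hgja, hgjv, hgje⟩ := ih
      refine ⟨fun z => deriv gj z * (z - z₀) - ((m : ℂ) + (j : ℂ)) * gj z, ?_, ?_, ?_⟩
      · exact ((analyticAt_deriv hgja).mul ((analyticAt_id.sub analyticAt_const))).sub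
          (analyticAt_const.mul hgja)
      · simp only [sub_self, mul_zero, zero_sub, hgjv, Finset.prod_range_succ]
        push_cast
        ring
      · have h1 : (iteratedDeriv (j + 1) f) =ᶠ[𝓝[≠] z₀]
            deriv fun w => gj w / (w - z₀) ^ (m + j) := by
          rw [iteratedDeriv_succ]
          exact ev_deriv_congr hgje
        refine h1.trans ((step_deriv hgja (m + j) (le_trans hm (Nat.le_add_right m j))).trans ?_)
        apply Filter.EventuallyEq.of_eq
        funext z
        have : (m : ℂ) + (j : ℂ) = ((m + j : ℕ) : ℂ) := by push_cast; ring
        rw [this]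
        ring_nf
      
  choose G hGa hGv hGe using key
  -- the combined numerator
  set Gt : ℂ → ℂ := fun z => G k z + ∑ j ∈ Finset.range k, a j z * G j z * (z - z₀) ^ (k - j)
    with hGt
  have hGta : AnalyticAt ℂ Gt z₀ := by
    apply (hGa k).add
    apply Finset.analyticAt_fun_sum
    intro j hj
    exact ((ha j (Finset.mem_range.mp hj)).mul (hGa j)).mul
      ((analyticAt_id.sub analyticAt_const).pow _)
  have hGtv : Gt z₀ = (-1) ^ k * (∏ i ∈ Finset.range k, ((m : ℂ) + (i : ℂ))) * g z₀ := by
    rw [hGt]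
    simp only [sub_self]
    rw [Finset.sum_eq_zero, add_zero, hGv k]
    intro j hj
    have : k - j ≠ 0 := by have := Finset.mem_range.mp hj; omega
    simp [zero_pow this]
  have hprodne : (∏ i ∈ Finset.range k, ((m : ℂ) + (i : ℂ))) ≠ 0 := by
    apply Finset.prod_ne_zero_iff.mpr
    intro i _
    have h1 : ((m : ℂ) + i) = ((m + i : ℕ) : ℂ) := by push_cast; ring
    rw [h1]
    exact_mod_cast (by omega : m + i ≠ 0)
  have hGt0 : Gt z₀ ≠ 0 := by
    rw [hGtv]
    exact mul_ne_zero (mul_ne_zero (pow_ne_zero _ (by norm_num)) hprodne) hg0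
  -- eventual identity for F
  have hFev : (fun z : ℂ => iteratedDeriv k f z + ∑ j ∈ Finset.range k, a j z * iteratedDeriv j f z)
      =ᶠ[𝓝[≠] z₀] fun z => Gt z / (z - z₀) ^ (m + k) := by
    have hall : ∀ᶠ z in 𝓝[≠] z₀, ∀ j ∈ Finset.range (k+1),
        iteratedDeriv j f z = G j z / (z - z₀) ^ (m + j) := by
      rw [Filter.eventually_all_finset]
      intro j _
      exact hGe j
    filter_upwards [hall, self_mem_nhdsWithin] with z hz hzne
    have hsub : z - z₀ ≠ 0 := sub_ne_zero.mpr hzne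
    rw [hz k (Finset.self_mem_range_succ k), hGt]
    rw [add_div, Finset.sum_div]
    congr 1
    apply Finset.sum_congr rfl
    intro j hj
    have hjk : j ≤ k := le_of_lt (Finset.mem_range.mp hj)
    rw [hz j (Finset.mem_range.mpr (by omega))]
    have hpk : (z - z₀) ^ (m + k) = (z - z₀) ^ (m + j) * (z - z₀) ^ (k - j) := by
      rw [← pow_add]; congr 1; omega
    rw [hpk]
    field_simp
  constructor
  · -- Tendsto
    have hcont : Filter.Tendsto (fun z => Gt z / g z) (𝓝 z₀) (𝓝 (Gt z₀ / g z₀)) :=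
      (hGta.continuousAt.div hg.continuousAt hg0).tendsto
    have hval : Gt z₀ / g z₀ = (-1) ^ k * ∏ i ∈ Finset.range k, ((m : ℂ) + (i : ℂ)) := by
      rw [hGtv]
      field_simp
    have := hcont.mono_left (nhdsWithin_le_nhds (s := {z₀}ᶜ))
    rw [hval] at this
    refine Filter.Tendsto.congr' ?_ this
    filter_upwards [hFev, hfg, self_mem_nhdsWithin] with z hz hfz hzne
    have hsub : z - z₀ ≠ 0 := sub_ne_zero.mpr hzne
    rw [hz, hfz]
    by_cases hgz : g z = 0
    · simp [hgz]
    · field_simp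
      rw [pow_add]
      ring
  · exact ⟨Gt, hGta, hGt0, hFev⟩
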